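/- Let G_n' be the extended welded tree graph of odd depth n, and define v₃ ∈ ℂ^E by: (v₃)_e = (−1/2)^⌈j/2⌉ if e belongs to layer j of the left tree, and (v₃)_e = (−1/2)^⌊j/2⌋ if e belongs to layer j of the right tree (the middle layer being layer n+1 of both trees, on which the two formulas agree since n is odd). Then |ss'⟩ + v₃ is orthogonal to ψ_u for every u ∈ A, and v₃ + |t't⟩ lies in the span of {ψ_u : u ∈ B}. Consequently R_A fixes |ss'⟩ + v₃ + |t't⟩ and R_B(|ss'⟩ + v₃ + |t't⟩) = |ss'⟩ − v₃ − |t't⟩. -/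

import Mathlib

/-!
**Statement 9.**
Let `G_n'` be the extended welded tree graph of odd depth `n`, and define `v₃ ∈ ℂ^E` by
`(v₃)_e = (−1/2)^⌈j/2⌉` on layer `j` of the left tree and `(v₃)_e = (−1/2)^⌊j/2⌋` on layer `j`
of the right tree (the middle layer being layer `n+1` of both trees, on which the two
formulas agree as `n` is odd).  Then `|ss'⟩ + v₃` is orthogonal to `ψ_u` for every `u ∈ A`,
and `v₃ + |t't⟩` lies in the span of `{ψ_u : u ∈ B}`.  Consequently `R_A` fixes
`|ss'⟩ + v₃ + |t't⟩` and `R_B (|ss'⟩ + v₃ + |t't⟩) = |ss'⟩ − v₃ − |t't⟩`.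

The welded tree graph is modelled abstractly: vertices `V` carry a side (`false` = left tree,
`true` = right tree) and a depth `≤ n`; edges `E` carry a layer `lay e ∈ {1, …, n+1}`
(`lay e = n+1` meaning a middle edge) and a side (meaningful for tree edges), with endpoint
maps `ep0` (shallower / left endpoint) and `ep1` (deeper / right endpoint).  A tree edge of
layer `j` joins a vertex of depth `j−1` to one of depth `j` on its own side; a middle edge
joins a left leaf to a right leaf.  Every vertex of depth `< n` has exactly two child edges,
every vertex of depth `≥ 1` has exactly one parent tree edge, and every leaf is incident to
exactly two middle edges; `s` and `t` are the unique roots of the two trees.  All edges have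
weight 1.  The walk space is `EuclideanSpace ℂ (E ⊕ Bool)` (`Sum.inr false = ss'`,
`Sum.inr true = t't`); part `A` consists of left vertices of even depth and right vertices of
odd depth, part `B` of the remaining vertices.  `R_A` is the unitary acting as `−1` on
`span{ψ_u : u ∈ A}` and as the identity on its orthogonal complement, specified here by these
defining properties (similarly `R_B`).
-/

noncomputable section

namespace Stmt9

variable {V E : Type*} [Fintype V] [Fintype E] [DecidableEq V] [DecidableEq E]

def ket (x : E ⊕ Bool) : EuclideanSpace ℂ (E ⊕ Bool) := EuclideanSpace.single x 1

/-- Vertices of part `A`: left vertices of even depth, right vertices of odd depth. -/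
def inA (sideV : V → Bool) (depth : V → ℕ) (u : V) : Prop :=
  (sideV u = false ∧ Even (depth u)) ∨ (sideV u = true ∧ Odd (depth u))

/-- Vertices of part `B`: left vertices of odd depth, right vertices of even depth. -/
def inB (sideV : V → Bool) (depth : V → ℕ) (u : V) : Prop :=
  (sideV u = false ∧ Odd (depth u)) ∨ (sideV u = true ∧ Even (depth u))

/-- The star state of a vertex `u`: the sum of the basis states of all edges of the extended
graph incident to `u` (all weights being 1). -/
def psi (ep0 ep1 : E → V) (s t : V) (u : V) : EuclideanSpace ℂ (E ⊕ Bool) :=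
  (∑ e ∈ Finset.univ.filter (fun e => ep0 e = u), ket (Sum.inl e)) +
  (∑ e ∈ Finset.univ.filter (fun e => ep1 e = u), ket (Sum.inl e)) +
  (if u = s then ket (Sum.inr false) else 0) +
  (if u = t then ket (Sum.inr true) else 0)

/-- The vector `v₃`: amplitude `(−1/2)^⌈j/2⌉` on layer `j` of the left tree and
`(−1/2)^⌊j/2⌋` on layer `j` of the right tree (`⌊j/2⌋ = j/2` and `⌈j/2⌉ = (j+1)/2` in
natural-number division). -/
def v₃ (lay : E → ℕ) (sideE : E → Bool) : EuclideanSpace ℂ (E ⊕ Bool) :=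
  ∑ e : E, ((if sideE e = false then (-(1/2) : ℂ) ^ ((lay e + 1) / 2)
      else (-(1/2) : ℂ) ^ (lay e / 2)) • ket (Sum.inl e))

set_option linter.unusedSectionVars false

lemma ket_apply (x y : E ⊕ Bool) : ket x y = if y = x then 1 else 0 :=
  EuclideanSpace.single_apply x 1 y

lemma sum_apply' {ι : Type*} (s : Finset ι) (f : ι → EuclideanSpace ℂ (E ⊕ Bool)) (y : E ⊕ Bool) :
    (∑ i ∈ s, f i) y = ∑ i ∈ s, f i y := by
  induction s using Finset.cons_induction with
  | empty => rfl
  | cons a s ha ih => rw [Finset.sum_cons, Finset.sum_cons, PiLp.add_apply, ih]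

def coeff (lay : E → ℕ) (sideE : E → Bool) (e : E) : ℂ :=
  if sideE e = false then (-(1/2) : ℂ) ^ ((lay e + 1) / 2) else (-(1/2) : ℂ) ^ (lay e / 2)

lemma v₃_apply_inl (lay : E → ℕ) (sideE : E → Bool) (e : E) :
    v₃ lay sideE (Sum.inl e) = coeff lay sideE e := by
  rw [v₃, sum_apply']
  simp only [PiLp.smul_apply, ket_apply, smul_eq_mul, mul_ite, mul_one, mul_zero,
    Sum.inl.injEq]
  rw [Finset.sum_ite_eq]
  simp [coeff]
  
lemma v₃_apply_inr (lay : E → ℕ) (sideE : E → Bool) (b : Bool) :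
    v₃ lay sideE (Sum.inr b) = 0 := by
  rw [v₃, sum_apply']
  simp [PiLp.smul_apply, ket_apply, apply_ite (fun v : EuclideanSpace ℂ (E ⊕ Bool) => v (Sum.inr b))]

lemma psi_apply_inl (ep0 ep1 : E → V) (s t u : V) (e : E) :
    psi ep0 ep1 s t u (Sum.inl e) =
      (if ep0 e = u then 1 else 0) + (if ep1 e = u then 1 else 0) := by
  rw [psi, PiLp.add_apply, PiLp.add_apply, PiLp.add_apply, sum_apply', sum_apply']
  simp only [ket_apply, Sum.inl.injEq, apply_ite (fun v : EuclideanSpace ℂ (E ⊕ Bool) => v (Sum.inl e))]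
  simp [Finset.sum_ite_eq, eq_comm]

lemma psi_apply_inrF (ep0 ep1 : E → V) (s t u : V) :
    psi ep0 ep1 s t u (Sum.inr false) = if u = s then 1 else 0 := by
  rw [psi, PiLp.add_apply, PiLp.add_apply, PiLp.add_apply, sum_apply', sum_apply']
  simp only [ket_apply, apply_ite (fun v : EuclideanSpace ℂ (E ⊕ Bool) => v (Sum.inr false))]
  simp

lemma psi_apply_inrT (ep0 ep1 : E → V) (s t u : V) :
    psi ep0 ep1 s t u (Sum.inr true) = if u = t then 1 else 0 := by
  rw [psi, PiLp.add_apply, PiLp.add_apply, PiLp.add_apply, sum_apply', sum_apply']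
  simp only [ket_apply, apply_ite (fun v : EuclideanSpace ℂ (E ⊕ Bool) => v (Sum.inr true))]
  simp

lemma inner_psi (ep0 ep1 : E → V) (s t u : V) (x : EuclideanSpace ℂ (E ⊕ Bool)) :
    (inner ℂ (psi ep0 ep1 s t u) x : ℂ)
      = (∑ e ∈ Finset.univ.filter (fun e => ep0 e = u), x (Sum.inl e))
      + (∑ e ∈ Finset.univ.filter (fun e => ep1 e = u), x (Sum.inl e))
      + (if u = s then x (Sum.inr false) else 0)
      + (if u = t then x (Sum.inr true) else 0) := by
  rw [PiLp.inner_apply, Fintype.sum_sum_type]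
  simp only [RCLike.inner_apply']
  have h1 : ∀ e : E, (starRingEnd ℂ) (psi ep0 ep1 s t u (Sum.inl e)) * x (Sum.inl e)
      = (if ep0 e = u then x (Sum.inl e) else 0) + (if ep1 e = u then x (Sum.inl e) else 0) := by
    intro e; rw [psi_apply_inl]; split_ifs <;> simp <;> ring
  simp only [h1]
  rw [Finset.sum_add_distrib, ← Finset.sum_filter, ← Finset.sum_filter, Fintype.sum_bool,
    psi_apply_inrF, psi_apply_inrT]
  have h2 : ∀ (c : Prop) [Decidable c] (y : ℂ),
      (starRingEnd ℂ) (if c then (1:ℂ) else 0) * y = if c then y else 0 := by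
    intro c _ y; split_ifs <;> simp
  rw [h2, h2]; ring
def cV (sideV : V → Bool) (depth : V → ℕ) (u : V) : ℂ :=
  if sideV u = false then (-(1/2) : ℂ) ^ ((depth u + 1) / 2) else (-(1/2) : ℂ) ^ (depth u / 2)

theorem welded_v3_reflections
    (n : ℕ) (hn : Odd n)
    (sideV : V → Bool) (depth : V → ℕ) (hdepth : ∀ u, depth u ≤ n)
    (lay : E → ℕ) (sideE : E → Bool) (ep0 ep1 : E → V)
    (hlay : ∀ e, 1 ≤ lay e ∧ lay e ≤ n + 1)
    (htree : ∀ e, lay e ≤ n → sideV (ep0 e) = sideE e ∧ depth (ep0 e) = lay e - 1 ∧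
        sideV (ep1 e) = sideE e ∧ depth (ep1 e) = lay e)
    (hmid : ∀ e, lay e = n + 1 → sideV (ep0 e) = false ∧ depth (ep0 e) = n ∧
        sideV (ep1 e) = true ∧ depth (ep1 e) = n)
    (s t : V) (hs : sideV s = false ∧ depth s = 0) (ht : sideV t = true ∧ depth t = 0)
    (hroot : ∀ u, depth u = 0 → (sideV u = false → u = s) ∧ (sideV u = true → u = t))
    (hchild : ∀ u, depth u < n → (Finset.univ.filter fun e => ep0 e = u).card = 2)
    (hparent : ∀ u, 1 ≤ depth u →
        (Finset.univ.filter fun e => lay e ≤ n ∧ ep1 e = u).card = 1)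
    (hmidL : ∀ u, sideV u = false → depth u = n →
        (Finset.univ.filter fun e => lay e = n + 1 ∧ ep0 e = u).card = 2)
    (hmidR : ∀ u, sideV u = true → depth u = n →
        (Finset.univ.filter fun e => lay e = n + 1 ∧ ep1 e = u).card = 2)
    (RA RB : EuclideanSpace ℂ (E ⊕ Bool) →ₗ[ℂ] EuclideanSpace ℂ (E ⊕ Bool))
    (hRAneg : ∀ u, inA sideV depth u → RA (psi ep0 ep1 s t u) = -psi ep0 ep1 s t u)
    (hRAid : ∀ x, (∀ u, inA sideV depth u → (inner ℂ (psi ep0 ep1 s t u) x : ℂ) = 0) → RA x = x)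
    (hRBneg : ∀ u, inB sideV depth u → RB (psi ep0 ep1 s t u) = -psi ep0 ep1 s t u)
    (hRBid : ∀ x, (∀ u, inB sideV depth u → (inner ℂ (psi ep0 ep1 s t u) x : ℂ) = 0) → RB x = x) :
    (∀ u, inA sideV depth u →
        (inner ℂ (psi ep0 ep1 s t u) (ket (Sum.inr false) + v₃ lay sideE) : ℂ) = 0) ∧
    (v₃ lay sideE + ket (Sum.inr true)) ∈
        Submodule.span ℂ (psi ep0 ep1 s t '' {u | inB sideV depth u}) ∧
    RA (ket (Sum.inr false) + v₃ lay sideE + ket (Sum.inr true))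
        = ket (Sum.inr false) + v₃ lay sideE + ket (Sum.inr true) ∧
    RB (ket (Sum.inr false) + v₃ lay sideE + ket (Sum.inr true))
        = ket (Sum.inr false) - v₃ lay sideE - ket (Sum.inr true) := by
  classical
  obtain ⟨k, hk⟩ := hn
  -- middle-edge coefficient is independent of the edge side
  have hmidcoeff : ∀ e, lay e = n + 1 → coeff lay sideE e = (-(1/2) : ℂ) ^ (k + 1) := by
    intro e he
    have h1 : (lay e + 1) / 2 = k + 1 := by omega
    have h2 : lay e / 2 = k + 1 := by omega
    simp only [coeff, h1, h2, ite_self]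
  -- splitting an incidence sum into tree part and middle part
  have hsplit : ∀ (ep : E → V) (u : V),
      (∑ e ∈ Finset.univ.filter (fun e => ep e = u), coeff lay sideE e)
      = (∑ e ∈ Finset.univ.filter (fun e => lay e ≤ n ∧ ep e = u), coeff lay sideE e)
      + (∑ e ∈ Finset.univ.filter (fun e => lay e = n + 1 ∧ ep e = u), coeff lay sideE e) := by
    intro ep u
    rw [Finset.sum_filter, Finset.sum_filter, Finset.sum_filter, ← Finset.sum_add_distrib]
    refine Finset.sum_congr rfl fun e _ => ?_
    have h := (hlay e).2
    by_cases h1 : ep e = u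
    · by_cases h2 : lay e ≤ n
      · rw [if_pos h1, if_pos ⟨h2, h1⟩, if_neg (fun hc => absurd hc.1 (by omega))]; ring
      · rw [if_pos h1, if_neg (fun hc => h2 hc.1), if_pos ⟨by omega, h1⟩]; ring
    · rw [if_neg h1, if_neg (fun hc => h1 hc.2), if_neg (fun hc => h1 hc.2)]; ring
  -- the children sum for a non-leaf vertex
  have hchildsum : ∀ u, depth u < n →
      (∑ e ∈ Finset.univ.filter (fun e => ep0 e = u), coeff lay sideE e)
      = 2 * (if sideV u = false then (-(1/2) : ℂ) ^ ((depth u + 2) / 2)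
          else (-(1/2) : ℂ) ^ ((depth u + 1) / 2)) := by
    intro u hu
    have hconst : ∀ e ∈ Finset.univ.filter (fun e => ep0 e = u), coeff lay sideE e
        = (if sideV u = false then (-(1/2) : ℂ) ^ ((depth u + 2) / 2)
            else (-(1/2) : ℂ) ^ ((depth u + 1) / 2)) := by
      intro e he
      rw [Finset.mem_filter] at he
      have he' := he.2
      have hle : lay e ≤ n := by
        by_contra hgt
        have h2 := (hlay e).2
        have h3 := (hmid e (by omega)).2.1
        rw [he'] at h3; omega
      obtain ⟨hs0, hd0, -, -⟩ := htree e hle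
      rw [he'] at hs0 hd0
      have hl : lay e = depth u + 1 := by have := (hlay e).1; omega
      have h1 : (lay e + 1) / 2 = (depth u + 2) / 2 := by omega
      have h2 : lay e / 2 = (depth u + 1) / 2 := by omega
      simp only [coeff, hs0, h1, h2]
    rw [Finset.sum_congr rfl hconst, Finset.sum_const, hchild u hu]
    simp [nsmul_eq_mul]
  -- the tree-parent sum
  have hparsum : ∀ u, 1 ≤ depth u →
      (∑ e ∈ Finset.univ.filter (fun e => lay e ≤ n ∧ ep1 e = u), coeff lay sideE e)
      = (if sideV u = false then (-(1/2) : ℂ) ^ ((depth u + 1) / 2)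
          else (-(1/2) : ℂ) ^ (depth u / 2)) := by
    intro u hu
    have hconst : ∀ e ∈ Finset.univ.filter (fun e => lay e ≤ n ∧ ep1 e = u), coeff lay sideE e
        = (if sideV u = false then (-(1/2) : ℂ) ^ ((depth u + 1) / 2)
            else (-(1/2) : ℂ) ^ (depth u / 2)) := by
      intro e he
      rw [Finset.mem_filter] at he
      obtain ⟨-, hle, he1⟩ := he
      obtain ⟨-, -, hs1, hd1⟩ := htree e hle
      rw [he1] at hs1 hd1
      simp only [coeff, hs1, hd1]
    rw [Finset.sum_congr rfl hconst, Finset.sum_const, hparent u hu]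
    simp
  -- the middle sums for leaves
  have hmidsum0 : ∀ u, sideV u = false → depth u = n →
      (∑ e ∈ Finset.univ.filter (fun e => lay e = n + 1 ∧ ep0 e = u), coeff lay sideE e)
      = 2 * (-(1/2) : ℂ) ^ (k + 1) := by
    intro u h1 h2
    rw [Finset.sum_congr rfl (fun e he => hmidcoeff e (Finset.mem_filter.mp he).2.1),
      Finset.sum_const, hmidL u h1 h2]
    simp [nsmul_eq_mul]
  have hmidsum1 : ∀ u, sideV u = true → depth u = n →
      (∑ e ∈ Finset.univ.filter (fun e => lay e = n + 1 ∧ ep1 e = u), coeff lay sideE e)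
      = 2 * (-(1/2) : ℂ) ^ (k + 1) := by
    intro u h1 h2
    rw [Finset.sum_congr rfl (fun e he => hmidcoeff e (Finset.mem_filter.mp he).2.1),
      Finset.sum_const, hmidR u h1 h2]
    simp [nsmul_eq_mul]
  -- emptiness facts
  have hmid0empty : ∀ u, ¬(sideV u = false ∧ depth u = n) →
      Finset.univ.filter (fun e => lay e = n + 1 ∧ ep0 e = u) = ∅ := by
    intro u hu
    rw [Finset.filter_eq_empty_iff]
    rintro e - ⟨h1, h2⟩
    obtain ⟨hx, hy, -, -⟩ := hmid e h1
    rw [h2] at hx hy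
    exact hu ⟨hx, hy⟩
  have hmid1empty : ∀ u, ¬(sideV u = true ∧ depth u = n) →
      Finset.univ.filter (fun e => lay e = n + 1 ∧ ep1 e = u) = ∅ := by
    intro u hu
    rw [Finset.filter_eq_empty_iff]
    rintro e - ⟨h1, h2⟩
    obtain ⟨-, -, hx, hy⟩ := hmid e h1
    rw [h2] at hx hy
    exact hu ⟨hx, hy⟩
  have hpar0empty : ∀ u, depth u = 0 →
      Finset.univ.filter (fun e => lay e ≤ n ∧ ep1 e = u) = ∅ := by
    intro u hu
    rw [Finset.filter_eq_empty_iff]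
    rintro e - ⟨h1, h2⟩
    obtain ⟨-, -, -, hy⟩ := htree e h1
    rw [h2] at hy
    have := (hlay e).1
    omega
  have hchild0empty : ∀ u, depth u = n →
      Finset.univ.filter (fun e => lay e ≤ n ∧ ep0 e = u) = ∅ := by
    intro u hu
    rw [Finset.filter_eq_empty_iff]
    rintro e - ⟨h1, h2⟩
    obtain ⟨-, hy, -, -⟩ := htree e h1
    rw [h2] at hy
    have := (hlay e).1
    omega
  -- pointwise values of the test vector
  have hxl : ∀ e, (ket (Sum.inr false) + v₃ lay sideE :
      EuclideanSpace ℂ (E ⊕ Bool)) (Sum.inl e) = coeff lay sideE e := by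
    intro e; rw [PiLp.add_apply, ket_apply, v₃_apply_inl]; simp
  have hxf : (ket (Sum.inr false) + v₃ lay sideE :
      EuclideanSpace ℂ (E ⊕ Bool)) (Sum.inr false) = 1 := by
    rw [PiLp.add_apply, ket_apply, v₃_apply_inr]; simp
  have hxt : (ket (Sum.inr false) + v₃ lay sideE :
      EuclideanSpace ℂ (E ⊕ Bool)) (Sum.inr true) = 0 := by
    rw [PiLp.add_apply, ket_apply, v₃_apply_inr]; simp
  have hAnet : ∀ u, inA sideV depth u → u ≠ t := by
    rintro u (⟨h1, -⟩ | ⟨-, h2⟩) h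
    · rw [h, ht.1] at h1; cases h1
    · rw [h, ht.2] at h2; simp [Nat.odd_iff] at h2
  have hBnes : ∀ u, inB sideV depth u → u ≠ s := by
    rintro u (⟨-, h2⟩ | ⟨h1, -⟩) h
    · rw [h, hs.2] at h2; simp [Nat.odd_iff] at h2
    · rw [h, hs.1] at h1; cases h1
  -- Part 1: orthogonality
  have key : ∀ u, inA sideV depth u →
      (inner ℂ (psi ep0 ep1 s t u) (ket (Sum.inr false) + v₃ lay sideE) : ℂ) = 0 := by
    intro u hu
    rw [inner_psi]
    rw [if_neg (hAnet u hu)]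
    simp only [hxl, hxf, hxt, add_zero]
    rcases hu with ⟨hsu, hdu⟩ | ⟨hsu, hdu⟩
    · -- left tree, even depth
      obtain ⟨m, hm⟩ := hdu
      have hdn : depth u < n := lt_of_le_of_ne (hdepth u) (by omega)
      rw [hsplit ep1 u, hmid1empty u (fun hc => by rw [hsu] at hc; cases hc.1),
        hchildsum u hdn, if_pos hsu]
      rcases Nat.eq_zero_or_pos (depth u) with hd0 | hd0
      · have hus : u = s := (hroot u hd0).1 hsu
        rw [hpar0empty u hd0, if_pos hus, Finset.sum_empty, hd0]
        norm_num
      · have hne : u ≠ s := fun h => by rw [h, hs.2] at hd0; omega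
        rw [hparsum u hd0, if_pos hsu, if_neg hne]
        have e1 : (depth u + 2) / 2 = m + 1 := by omega
        have e2 : (depth u + 1) / 2 = m := by omega
        rw [e1, e2, pow_succ]
        ring
    · -- right tree, odd depth
      obtain ⟨m, hm⟩ := hdu
      have hd0 : 1 ≤ depth u := by omega
      have hne : u ≠ s := fun h => by rw [h, hs.1] at hsu; cases hsu
      rw [if_neg hne, add_zero, hsplit ep1 u, hparsum u hd0, if_neg (by rw [hsu]; simp)]
      by_cases hdn : depth u = n
      · rw [hsplit ep0 u, hchild0empty u hdn, hmid0empty u (fun hc => by rw [hsu] at hc; cases hc.1),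
          Finset.sum_empty, hmidsum1 u hsu hdn]
        have e1 : depth u / 2 = k := by omega
        rw [e1, pow_succ]
        ring
      · have hdn' : depth u < n := lt_of_le_of_ne (hdepth u) hdn
        rw [hmid1empty u (fun hc => hdn hc.2), hchildsum u hdn', if_neg (by rw [hsu]; simp),
          Finset.sum_empty]
        have e1 : (depth u + 1) / 2 = m + 1 := by omega
        have e2 : depth u / 2 = m := by omega
        rw [e1, e2, pow_succ]
        ring
  -- Part 2: the explicit B-combination
  have hsnotB : ¬ inB sideV depth s := by
    rintro (⟨-, h2⟩ | ⟨h1, -⟩)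
    · rw [hs.2] at h2; simp [Nat.odd_iff] at h2
    · rw [hs.1] at h1; cases h1
  have htB : inB sideV depth t := Or.inr ⟨ht.1, by rw [ht.2]; exact Even.zero⟩
  have hsum : ∑ u ∈ Finset.univ.filter (fun u => inB sideV depth u),
      cV sideV depth u • psi ep0 ep1 s t u = v₃ lay sideE + ket (Sum.inr true) := by
    ext z
    rcases z with e | b
    · rw [sum_apply', PiLp.add_apply, v₃_apply_inl, ket_apply,
        if_neg (by simp : ¬(Sum.inl e = (Sum.inr true : E ⊕ Bool))), add_zero]
      simp only [PiLp.smul_apply, smul_eq_mul, psi_apply_inl]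
      have hterm : ∀ u ∈ Finset.univ.filter (fun u => inB sideV depth u),
          cV sideV depth u * ((if ep0 e = u then (1 : ℂ) else 0) + (if ep1 e = u then 1 else 0))
          = (if ep0 e = u then cV sideV depth u else 0)
            + (if ep1 e = u then cV sideV depth u else 0) := by
        intro u _; split_ifs <;> ring
      rw [Finset.sum_congr rfl hterm, Finset.sum_add_distrib, Finset.sum_ite_eq,
        Finset.sum_ite_eq]
      simp only [Finset.mem_filter, Finset.mem_univ, true_and]
      by_cases hle : lay e ≤ n
      · obtain ⟨h0s, h0d, h1s, h1d⟩ := htree e hle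
        have hl1 := (hlay e).1
        rcases Nat.even_or_odd (lay e) with ⟨m, hm⟩ | ⟨m, hm⟩
        · -- even layer: B-endpoint is ep1 on the right side, ep0 on the left side
          cases hse : sideE e with
          | false =>
            have hb0 : inB sideV depth (ep0 e) :=
              Or.inl ⟨by rw [h0s, hse], by rw [h0d, Nat.odd_iff]; omega⟩
            have hb1 : ¬ inB sideV depth (ep1 e) := by
              rintro (⟨-, hy⟩ | ⟨hx, -⟩)
              · rw [h1d, Nat.odd_iff] at hy; omega
              · rw [h1s, hse] at hx; cases hx
            rw [if_pos hb0, if_neg hb1, add_zero]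
            simp only [cV, coeff, h0s, hse, if_pos rfl, h0d]
            rw [if_true]
            congr 1
            omega
          | true =>
            have hb1 : inB sideV depth (ep1 e) :=
              Or.inr ⟨by rw [h1s, hse], by rw [h1d]; exact ⟨m, hm⟩⟩
            have hb0 : ¬ inB sideV depth (ep0 e) := by
              rintro (⟨hx, -⟩ | ⟨-, hy⟩)
              · rw [h0s, hse] at hx; cases hx
              · rw [h0d, Nat.even_iff] at hy; omega
            rw [if_pos hb1, if_neg hb0, zero_add]
            simp only [cV, coeff, h1s, hse, h1d]
        · -- odd layer
          cases hse : sideE e with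
          | false =>
            have hb1 : inB sideV depth (ep1 e) :=
              Or.inl ⟨by rw [h1s, hse], by rw [h1d]; exact ⟨m, hm⟩⟩
            have hb0 : ¬ inB sideV depth (ep0 e) := by
              rintro (⟨-, hy⟩ | ⟨hx, -⟩)
              · rw [h0d, Nat.odd_iff] at hy; omega
              · rw [h0s, hse] at hx; cases hx
            rw [if_pos hb1, if_neg hb0, zero_add]
            simp only [cV, coeff, h1s, hse, if_pos rfl, h1d]
          | true =>
            have hb0 : inB sideV depth (ep0 e) :=
              Or.inr ⟨by rw [h0s, hse], by rw [h0d, Nat.even_iff]; omega⟩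
            have hb1 : ¬ inB sideV depth (ep1 e) := by
              rintro (⟨hx, -⟩ | ⟨-, hy⟩)
              · rw [h1s, hse] at hx; cases hx
              · rw [h1d, Nat.even_iff] at hy; omega
            rw [if_pos hb0, if_neg hb1, add_zero]
            simp only [cV, coeff, h0s, hse, h0d]
            norm_num
            congr 1
            omega
      · have hle' : lay e = n + 1 := by have := (hlay e).2; omega
        obtain ⟨h0s, h0d, h1s, h1d⟩ := hmid e hle'
        have hb0 : inB sideV depth (ep0 e) := Or.inl ⟨h0s, by rw [h0d]; exact ⟨k, hk⟩⟩
        have hb1 : ¬ inB sideV depth (ep1 e) := by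
          rintro (⟨hx, -⟩ | ⟨-, hy⟩)
          · rw [h1s] at hx; cases hx
          · rw [h1d, Nat.even_iff] at hy; omega
        rw [if_pos hb0, if_neg hb1, add_zero, hmidcoeff e hle']
        simp only [cV, h0s, if_pos rfl, h0d]
        rw [if_true]
        congr 1
        omega
    · cases b with
      | false =>
        rw [sum_apply', PiLp.add_apply, v₃_apply_inr, ket_apply,
          if_neg (by simp : ¬((Sum.inr false : E ⊕ Bool) = Sum.inr true)), add_zero]
        simp only [PiLp.smul_apply, smul_eq_mul, psi_apply_inrF, mul_ite, mul_one, mul_zero]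
        rw [Finset.sum_ite_eq']
        simp [hsnotB]
      | true =>
        rw [sum_apply', PiLp.add_apply, v₃_apply_inr, ket_apply,
          if_pos rfl, zero_add]
        simp only [PiLp.smul_apply, smul_eq_mul, psi_apply_inrT, mul_ite, mul_one, mul_zero]
        rw [Finset.sum_ite_eq']
        rw [if_pos (by simp [htB])]
        simp only [cV, ht.1, ht.2]
        norm_num
  refine ⟨key, ?_, ?_, ?_⟩
  · rw [← hsum]
    exact Submodule.sum_mem _ fun u hu => Submodule.smul_mem _ _
      (Submodule.subset_span ⟨u, by simpa using (Finset.mem_filter.mp hu).2, rfl⟩)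
  · apply hRAid
    intro u hu
    have hgrp : ket (Sum.inr false) + v₃ lay sideE + ket (Sum.inr true)
        = (ket (Sum.inr false) + v₃ lay sideE) + ket (Sum.inr true) := rfl
    rw [hgrp, inner_add_right, key u hu, zero_add, inner_psi]
    have h1 : ∀ e : E, (ket (Sum.inr true) : EuclideanSpace ℂ (E ⊕ Bool)) (Sum.inl e) = 0 :=
      fun e => by rw [ket_apply]; simp
    have h2 : (ket (Sum.inr true) : EuclideanSpace ℂ (E ⊕ Bool)) (Sum.inr false) = 0 := by
      rw [ket_apply]; simp
    rw [if_neg (hAnet u hu)]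
    simp only [h1, h2, Finset.sum_const_zero, add_zero, zero_add, ite_self]
  · have hrb1 : RB (ket (Sum.inr false)) = ket (Sum.inr false) := by
      apply hRBid
      intro u hu
      rw [inner_psi]
      have h1 : ∀ e : E, (ket (Sum.inr false) : EuclideanSpace ℂ (E ⊕ Bool)) (Sum.inl e) = 0 :=
        fun e => by rw [ket_apply]; simp
      have h2 : (ket (Sum.inr false) : EuclideanSpace ℂ (E ⊕ Bool)) (Sum.inr true) = 0 := by
        rw [ket_apply]; simp
      rw [if_neg (hBnes u hu)]
      simp only [h1, h2, Finset.sum_const_zero, add_zero, zero_add, ite_self]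
    have hrb2 : RB (v₃ lay sideE + ket (Sum.inr true)) = -(v₃ lay sideE + ket (Sum.inr true)) := by
      rw [← hsum, map_sum]
      rw [Finset.sum_congr rfl (fun u hu => by
        rw [LinearMap.map_smul, hRBneg u ((Finset.mem_filter.mp hu).2), smul_neg])]
      rw [← Finset.sum_neg_distrib]
    have hgrp : ket (Sum.inr false) + v₃ lay sideE + ket (Sum.inr true)
        = ket (Sum.inr false) + (v₃ lay sideE + ket (Sum.inr true)) := by rw [add_assoc]
    rw [hgrp, map_add, hrb1, hrb2]
    abel

end Stmt9
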